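/- Define Υ(x,y,a₂,a₃) = (x−y)^{1/3}·((2/21)x³ + (1/7)x²y + (3/7)xy² − a₃) on {(x,y,a₂,a₃) ∈ ℝ⁴ : x > y}. Then: (i) 3 ∂²Υ/∂x² + (2/(y−x)) ∂Υ/∂y + 2 ∂Υ/∂a₂ + 2x ∂Υ/∂a₃ = 0; and (ii) (x ∂/∂x + y ∂/∂y + 2a₂ ∂/∂a₂ + 3a₃ ∂/∂a₃)Υ = (10/3)Υ. -/

import Mathlib

lemma rpmulL (y c : ℝ) {t : ℝ} (ht : y < t) {p : ℝ → ℝ} {p' : ℝ}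
    (hp : HasDerivAt p p' t) :
    HasDerivAt (fun s => (s - y) ^ c * p s)
      (c * (t - y) ^ (c - 1) * p t + (t - y) ^ c * p') t := by
  have h1 : HasDerivAt (fun s : ℝ => (s - y) ^ c) (c * (t - y) ^ (c - 1)) t := by
    have := ((hasDerivAt_id t).sub_const y).rpow_const
      (p := c) (Or.inl (sub_ne_zero.2 ht.ne'))
    simpa using this
  exact h1.mul hp

lemma rpmulR (x c : ℝ) {t : ℝ} (ht : t < x) {p : ℝ → ℝ} {p' : ℝ}
    (hp : HasDerivAt p p' t) :
    HasDerivAt (fun s => (x - s) ^ c * p s)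
      (-(c * (x - t) ^ (c - 1)) * p t + (x - t) ^ c * p') t := by
  have h1 : HasDerivAt (fun s : ℝ => (x - s) ^ c) (-(c * (x - t) ^ (c - 1))) t := by
    have := ((hasDerivAt_id t).const_sub x).rpow_const
      (p := c) (Or.inl (sub_ne_zero.2 ht.ne'))
    simpa using this
  exact h1.mul hp

/-- The SLE₆(0) local martingale function
`Υ(x,y,a₂,a₃) = (x-y)^{1/3}((2/21)x³ + (1/7)x²y + (3/7)xy² - a₃)`. -/
noncomputable def Υ13 (x y _a₂ a₃ : ℝ) : ℝ :=
  (x - y) ^ ((1 : ℝ) / 3)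
    * (2 / 21 * x ^ 3 + 1 / 7 * x ^ 2 * y + 3 / 7 * x * y ^ 2 - a₃)

/-- `Υ` is annihilated by the SLE₆(0) operator and has
`L₀`-eigenvalue `10/3`. -/
theorem stmt_13 :
    ∀ x y a₂ a₃ : ℝ, y < x →
      (3 * deriv (fun x' => deriv (fun x'' => Υ13 x'' y a₂ a₃) x') x
          + 2 / (y - x) * deriv (fun y' => Υ13 x y' a₂ a₃) y
          + 2 * deriv (fun a₂' => Υ13 x y a₂' a₃) a₂
          + 2 * x * deriv (fun a₃' => Υ13 x y a₂ a₃') a₃ = 0)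
      ∧ (x * deriv (fun x' => Υ13 x' y a₂ a₃) x + y * deriv (fun y' => Υ13 x y' a₂ a₃) y
          + 2 * a₂ * deriv (fun a₂' => Υ13 x y a₂' a₃) a₂
          + 3 * a₃ * deriv (fun a₃' => Υ13 x y a₂ a₃') a₃
          = 10 / 3 * Υ13 x y a₂ a₃) := by
  intro x y a₂ a₃ h
  have hu : (0:ℝ) < x - y := sub_pos.2 h
  have hyx : y - x ≠ 0 := sub_ne_zero.2 h.ne
  -- polynomial derivatives
  have hPd : ∀ t : ℝ, HasDerivAt
      (fun s : ℝ => 2 / 21 * s ^ 3 + 1 / 7 * s ^ 2 * y + 3 / 7 * s * y ^ 2 - a₃)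
      (2 / 7 * t ^ 2 + 2 / 7 * t * y + 3 / 7 * y ^ 2) t := by
    intro t
    have hd := ((((hasDerivAt_pow 3 t).const_mul (2/21 : ℝ)).add
        (((hasDerivAt_pow 2 t).const_mul (1/7 : ℝ)).mul_const y)).add
        (((hasDerivAt_id t).const_mul (3/7 : ℝ)).mul_const (y ^ 2))).sub_const a₃
    refine hd.congr_deriv ?_
    push_cast; ring
  have hPxd : ∀ t : ℝ, HasDerivAt
      (fun s : ℝ => 2 / 7 * s ^ 2 + 2 / 7 * s * y + 3 / 7 * y ^ 2)
      (4 / 7 * t + 2 / 7 * y) t := by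
    intro t
    have hd := (((hasDerivAt_pow 2 t).const_mul (2/7 : ℝ)).add
        (((hasDerivAt_id t).const_mul (2/7 : ℝ)).mul_const y)).add_const (3/7 * y ^ 2)
    refine hd.congr_deriv ?_
    push_cast; ring
  have hQd : HasDerivAt
      (fun s : ℝ => 2 / 21 * x ^ 3 + 1 / 7 * x ^ 2 * s + 3 / 7 * x * s ^ 2 - a₃)
      (1 / 7 * x ^ 2 + 6 / 7 * x * y) y := by
    have hd := (((hasDerivAt_id y).const_mul (1/7 * x ^ 2 : ℝ)).const_add (2/21 * x ^ 3)).add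
        (((hasDerivAt_pow 2 y).const_mul (3/7 * x : ℝ))) |>.sub_const a₃
    refine hd.congr_deriv ?_
    push_cast; ring
  -- first x-derivative at any t > y
  have hX : ∀ t : ℝ, y < t → HasDerivAt (fun s => Υ13 s y a₂ a₃)
      ((1:ℝ)/3 * (t - y) ^ ((1:ℝ)/3 - 1)
          * (2 / 21 * t ^ 3 + 1 / 7 * t ^ 2 * y + 3 / 7 * t * y ^ 2 - a₃)
        + (t - y) ^ ((1:ℝ)/3) * (2 / 7 * t ^ 2 + 2 / 7 * t * y + 3 / 7 * y ^ 2)) t :=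
    fun t ht => rpmulL y ((1:ℝ)/3) ht (hPd t)
  have hXd := (hX x h).deriv
  -- the derivative function agrees near x with a nice function F
  have hev : (fun x' => deriv (fun x'' => Υ13 x'' y a₂ a₃) x')
      =ᶠ[nhds x] (fun s => (s - y) ^ ((1:ℝ)/3 - 1)
          * ((1:ℝ)/3 * (2 / 21 * s ^ 3 + 1 / 7 * s ^ 2 * y + 3 / 7 * s * y ^ 2 - a₃))
        + (s - y) ^ ((1:ℝ)/3) * (2 / 7 * s ^ 2 + 2 / 7 * s * y + 3 / 7 * y ^ 2)) := by
    filter_upwards [eventually_gt_nhds h] with t ht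
    rw [(hX t ht).deriv]; ring
  have hF := ((rpmulL y ((1:ℝ)/3 - 1) h ((hPd x).const_mul ((1:ℝ)/3))).add
      (rpmulL y ((1:ℝ)/3) h (hPxd x))).deriv
  have hXX : deriv (fun x' => deriv (fun x'' => Υ13 x'' y a₂ a₃) x') x
      = ((1:ℝ)/3 - 1) * (x - y) ^ ((1:ℝ)/3 - 1 - 1)
          * ((1:ℝ)/3 * (2 / 21 * x ^ 3 + 1 / 7 * x ^ 2 * y + 3 / 7 * x * y ^ 2 - a₃))
        + (x - y) ^ ((1:ℝ)/3 - 1)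
          * ((1:ℝ)/3 * (2 / 7 * x ^ 2 + 2 / 7 * x * y + 3 / 7 * y ^ 2))
        + ((1:ℝ)/3 * (x - y) ^ ((1:ℝ)/3 - 1)
            * (2 / 7 * x ^ 2 + 2 / 7 * x * y + 3 / 7 * y ^ 2)
          + (x - y) ^ ((1:ℝ)/3) * (4 / 7 * x + 2 / 7 * y)) := by
    rw [hev.deriv_eq]; exact hF
  have hY : deriv (fun y' => Υ13 x y' a₂ a₃) y
      = -((1:ℝ)/3 * (x - y) ^ ((1:ℝ)/3 - 1))
          * (2 / 21 * x ^ 3 + 1 / 7 * x ^ 2 * y + 3 / 7 * x * y ^ 2 - a₃)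
        + (x - y) ^ ((1:ℝ)/3) * (1 / 7 * x ^ 2 + 6 / 7 * x * y) :=
    (rpmulR x ((1:ℝ)/3) h hQd).deriv
  have hA2 : deriv (fun a₂' => Υ13 x y a₂' a₃) a₂ = 0 := by
    simp [Υ13]
  have hA3 : deriv (fun a₃' => Υ13 x y a₂ a₃') a₃ = (x - y) ^ ((1:ℝ)/3) * (-1) := by
    exact (((hasDerivAt_id a₃).const_sub
      (2 / 21 * x ^ 3 + 1 / 7 * x ^ 2 * y + 3 / 7 * x * y ^ 2)).const_mul
      ((x - y) ^ ((1:ℝ)/3))).deriv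
  have eC : (x - y) ^ ((1:ℝ)/3) = (x - y) ^ ((1:ℝ)/3 - 1) * (x - y) := by
    rw [← Real.rpow_add_one hu.ne']; norm_num
  have eB : (x - y) ^ ((1:ℝ)/3 - 1) = (x - y) ^ ((1:ℝ)/3 - 1 - 1) * (x - y) := by
    rw [← Real.rpow_add_one hu.ne']; norm_num
  constructor
  · rw [hXX, hY, hA2, hA3, eC, eB]
    field_simp
    ring
  · rw [hXd, hY, hA2, hA3]
    simp only [Υ13]
    rw [eC]
    ring
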